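/- For symmetric N×N real matrices A and B, the Lévy distance between the empirical spectral distributions of A and B is at most rank(A-B)/N. -/

import Mathlib

open scoped RealInnerProductSpace
open Module Submodule

section helpers
lemma aux_apply_eig {N : ℕ} {M : Matrix (Fin N) (Fin N) ℝ} (hM : M.IsHermitian) (i : Fin N) :
    Matrix.toEuclideanLin M (hM.eigenvectorBasis i)
      = hM.eigenvalues i • hM.eigenvectorBasis i := by
  have h := hM.mulVec_eigenvectorBasis i
  ext j
  simp [Matrix.toEuclideanLin_apply, h]

lemma aux_quad {N : ℕ} {M : Matrix (Fin N) (Fin N) ℝ} (hM : M.IsHermitian)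
    (v : EuclideanSpace ℝ (Fin N)) :
    ⟪v, Matrix.toEuclideanLin M v⟫
      = ∑ i, hM.eigenvalues i * ⟪hM.eigenvectorBasis i, v⟫ ^ 2 := by
  rw [← hM.eigenvectorBasis.sum_inner_mul_inner v (Matrix.toEuclideanLin M v)]
  refine Finset.sum_congr rfl fun i _ => ?_
  have hsym := (Matrix.isHermitian_iff_isSymmetric.mp hM)
  have h1 : ⟪hM.eigenvectorBasis i, Matrix.toEuclideanLin M v⟫
      = hM.eigenvalues i * ⟪hM.eigenvectorBasis i, v⟫ := by
    rw [← hsym (hM.eigenvectorBasis i) v, aux_apply_eig, real_inner_smul_left]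
  rw [h1, real_inner_comm v]
  ring

lemma aux_parseval {N : ℕ} (b : OrthonormalBasis (Fin N) ℝ (EuclideanSpace ℝ (Fin N)))
    (v : EuclideanSpace ℝ (Fin N)) :
    ⟪v, v⟫ = ∑ i, ⟪b i, v⟫ ^ 2 := by
  rw [← b.sum_inner_mul_inner v v]
  refine Finset.sum_congr rfl fun i _ => ?_
  rw [real_inner_comm v]
  ring

lemma aux_inner_zero {N : ℕ} (b : OrthonormalBasis (Fin N) ℝ (EuclideanSpace ℝ (Fin N)))
    (s : Set (Fin N)) {v : EuclideanSpace ℝ (Fin N)}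
    (hv : v ∈ span ℝ (⇑b '' s)) {i : Fin N} (hi : i ∉ s) :
    ⟪b i, v⟫ = 0 := by
  induction hv using span_induction with
  | mem w hw =>
    obtain ⟨j, hj, rfl⟩ := hw
    exact b.orthonormal.2 (fun h => hi (h ▸ hj))
  | zero => exact inner_zero_right _
  | add w u _ _ hw hu => rw [inner_add_right, hw, hu, add_zero]
  | smul c w _ hw => rw [inner_smul_right, hw, mul_zero]

lemma aux_finrank_span {N : ℕ} (b : OrthonormalBasis (Fin N) ℝ (EuclideanSpace ℝ (Fin N)))
    (s : Set (Fin N)) [Fintype s] :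
    finrank ℝ (span ℝ (⇑b '' s)) = Fintype.card s := by
  rw [← Set.range_restrict]
  have hli : LinearIndependent ℝ (s.restrict ⇑b) := by
    have := b.toBasis.linearIndependent.comp ((↑) : s → Fin N) Subtype.val_injective
    exact this
  exact finrank_span_eq_card hli
end helpers

open Classical in
lemma aux_count {N : ℕ} (A B : Matrix (Fin N) (Fin N) ℝ)
    (hA : A.IsHermitian) (hB : B.IsHermitian) (x : ℝ) :
    (Finset.univ.filter fun i => hA.eigenvalues i ≤ x).card ≤
      (Finset.univ.filter fun i => hB.eigenvalues i ≤ x).card + (A - B).rank := by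
  classical
  set bA := hA.eigenvectorBasis with hbA
  set bB := hB.eigenvectorBasis with hbB
  set sA : Set (Fin N) := {i | hA.eigenvalues i ≤ x} with hsA
  set sB : Set (Fin N) := {i | ¬ hB.eigenvalues i ≤ x} with hsB
  set V := span ℝ (⇑bA '' sA) with hV
  set W := span ℝ (⇑bB '' sB) with hW
  set K := LinearMap.ker (Matrix.toEuclideanLin (A - B)) with hK
  -- trivial intersection
  have hbot : V ⊓ W ⊓ K = ⊥ := by
    rw [eq_bot_iff]
    rintro v ⟨⟨hvV, hvW⟩, hvK⟩
    rw [mem_bot]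
    by_contra hv0
    have hABv : Matrix.toEuclideanLin A v = Matrix.toEuclideanLin B v := by
      have h0 : Matrix.toEuclideanLin (A - B) v = 0 := hvK
      rw [map_sub, LinearMap.sub_apply, sub_eq_zero] at h0
      exact h0
    have h1 : ⟪v, Matrix.toEuclideanLin A v⟫ ≤ x * ⟪v, v⟫ := by
      rw [aux_quad hA v, aux_parseval bA v, Finset.mul_sum]
      refine Finset.sum_le_sum fun i _ => ?_
      by_cases hi : i ∈ sA
      · exact mul_le_mul_of_nonneg_right hi (sq_nonneg _)
      · rw [aux_inner_zero bA sA hvV hi]; simp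
    have h2 : x * ⟪v, v⟫ < ⟪v, Matrix.toEuclideanLin B v⟫ := by
      rw [aux_quad hB v, aux_parseval bB v, Finset.mul_sum]
      have hex : ∃ i, ⟪bB i, v⟫ ≠ 0 := by
        by_contra hall
        push_neg at hall
        apply hv0
        rw [← inner_self_eq_zero (𝕜 := ℝ), aux_parseval bB v]
        simp [hall]
      obtain ⟨i0, hi0⟩ := hex
      have hi0B : i0 ∈ sB := by
        by_contra h
        exact hi0 (aux_inner_zero bB sB hvW h)
      refine Finset.sum_lt_sum (fun i _ => ?_) ⟨i0, Finset.mem_univ i0, ?_⟩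
      · by_cases hi : i ∈ sB
        · exact mul_le_mul_of_nonneg_right (le_of_lt (not_le.mp hi)) (sq_nonneg _)
        · rw [aux_inner_zero bB sB hvW hi]; simp
      · exact mul_lt_mul_of_pos_right (not_le.mp hi0B) (sq_pos_of_ne_zero hi0)
    rw [hABv] at h1
    linarith
  -- dimensions
  have hdimV : finrank ℝ ↥V = (Finset.univ.filter fun i => hA.eigenvalues i ≤ x).card := by
    rw [hV, aux_finrank_span]
    simp [hsA, Fintype.card_subtype]
  have hdimW : finrank ℝ ↥W = (Finset.univ.filter fun i => ¬ hB.eigenvalues i ≤ x).card := by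
    rw [hW, aux_finrank_span]
    simp [hsB, Fintype.card_subtype]
  have hcardB : (Finset.univ.filter fun i => ¬ hB.eigenvalues i ≤ x).card
      + (Finset.univ.filter fun i => hB.eigenvalues i ≤ x).card = N := by
    rw [add_comm, Finset.card_filter_add_card_filter_not]
    simp
  have hdimK : finrank ℝ ↥K + (A - B).rank = N := by
    have h := LinearMap.finrank_range_add_finrank_ker (Matrix.toEuclideanLin (A - B))
    have hr : (A - B).rank = finrank ℝ (LinearMap.range (Matrix.toEuclideanLin (A - B))) := by
      rw [Matrix.toEuclideanLin_eq_toLin]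
      exact Matrix.rank_eq_finrank_range_toLin (A - B) (PiLp.basisFun _ _ _) (PiLp.basisFun _ _ _)
    rw [← hK] at h
    rw [hr, add_comm]
    simpa using h
  have hd1 : finrank ℝ ↥(V ⊔ W) + finrank ℝ ↥(V ⊓ W) = finrank ℝ ↥V + finrank ℝ ↥W :=
    Submodule.finrank_sup_add_finrank_inf_eq V W
  have hd2 : finrank ℝ ↥((V ⊓ W) ⊔ K) + finrank ℝ ↥((V ⊓ W) ⊓ K)
      = finrank ℝ ↥(V ⊓ W) + finrank ℝ ↥K :=
    Submodule.finrank_sup_add_finrank_inf_eq (V ⊓ W) K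
  have hd3 : finrank ℝ ↥((V ⊓ W) ⊓ K) = 0 := by rw [hbot]; exact finrank_bot ℝ _
  have hle1 : finrank ℝ ↥(V ⊔ W) ≤ N := by
    have := Submodule.finrank_le (V ⊔ W)
    simpa using this
  have hle2 : finrank ℝ ↥((V ⊓ W) ⊔ K) ≤ N := by
    have := Submodule.finrank_le ((V ⊓ W) ⊔ K)
    simpa using this
  omega

lemma aux_rank_neg {N : ℕ} (M : Matrix (Fin N) (Fin N) ℝ) : (-M).rank = M.rank := by
  have h : (-M).mulVecLin = -(M.mulVecLin) := by
    ext v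
    simp [Matrix.neg_mulVec]
  rw [Matrix.rank, Matrix.rank, h, LinearMap.range_neg]

open Classical in
/-- The cumulative distribution function of the empirical spectral distribution of a
symmetric (= Hermitian, over `ℝ`) real matrix: mass `1/N` at each eigenvalue. -/
noncomputable def esdCDF {N : ℕ} {A : Matrix (Fin N) (Fin N) ℝ}
    (hA : A.IsHermitian) : ℝ → ℝ :=
  fun x => ((Finset.univ.filter fun i => hA.eigenvalues i ≤ x).card : ℝ) / N

/-- The Lévy distance between two cumulative distribution functions:
`inf {ε > 0 : F(x-ε) - ε ≤ G(x) ≤ F(x+ε) + ε for all x}`. -/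
noncomputable def levyDist (F G : ℝ → ℝ) : ℝ :=
  sInf {ε : ℝ | 0 < ε ∧ ∀ x, F (x - ε) - ε ≤ G x ∧ G x ≤ F (x + ε) + ε}

lemma esdCDF_mono {N : ℕ} (hN : 0 < N) {M : Matrix (Fin N) (Fin N) ℝ}
    (hM : M.IsHermitian) {x y : ℝ} (h : x ≤ y) : esdCDF hM x ≤ esdCDF hM y := by
  unfold esdCDF
  have hN' : (0 : ℝ) < N := by exact_mod_cast hN
  gcongr

/-- For symmetric `N×N` real matrices `A` and `B`, the Lévy distance between the
empirical spectral distributions of `A` and `B` is at most `rank(A-B)/N`. -/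
theorem hadamard_stmt6 {N : ℕ} (hN : 0 < N)
    (A B : Matrix (Fin N) (Fin N) ℝ)
    (hA : A.IsHermitian) (hB : B.IsHermitian) :
    levyDist (esdCDF hA) (esdCDF hB) ≤ ((A - B).rank : ℝ) / N := by
  classical
  have hN' : (0 : ℝ) < N := by exact_mod_cast hN
  set r : ℝ := ((A - B).rank : ℝ) / N with hr
  have hr0 : 0 ≤ r := by positivity
  have key1 : ∀ x, esdCDF hA x ≤ esdCDF hB x + r := by
    intro x
    have h := aux_count A B hA hB x
    unfold esdCDF
    rw [hr, ← add_div]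
    gcongr
    exact_mod_cast h
  have key2 : ∀ x, esdCDF hB x ≤ esdCDF hA x + r := by
    intro x
    have h := aux_count B A hB hA x
    have hrk : (B - A).rank = (A - B).rank := by
      rw [← neg_sub A B, aux_rank_neg]
    rw [hrk] at h
    unfold esdCDF
    rw [hr, ← add_div]
    gcongr
    exact_mod_cast h
  refine le_of_forall_pos_le_add fun δ hδ => ?_
  have hmem : r + δ ∈ {ε : ℝ | 0 < ε ∧ ∀ x, esdCDF hA (x - ε) - ε ≤ esdCDF hB x ∧
      esdCDF hB x ≤ esdCDF hA (x + ε) + ε} := by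
    refine ⟨by linarith, fun x => ⟨?_, ?_⟩⟩
    · have m := esdCDF_mono hN hA (show x - (r + δ) ≤ x by linarith)
      have k := key1 x
      linarith
    · have m := esdCDF_mono hN hA (show x ≤ x + (r + δ) by linarith)
      have k := key2 x
      linarith
  have hbdd : BddBelow {ε : ℝ | 0 < ε ∧ ∀ x, esdCDF hA (x - ε) - ε ≤ esdCDF hB x ∧
      esdCDF hB x ≤ esdCDF hA (x + ε) + ε} := ⟨0, fun ε hε => le_of_lt hε.1⟩
  exact (csInf_le hbdd hmem)
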